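/- In the symmetric mixed equilibrium, for every bid b ∈ [0, V-g], the indifference condition holds: (p* + (1-p*)F*(b))^(N-1) * (V - g - b) = (1 - (p* + (1-p*)F*(b))^(N-1)) * (r1*g + r2*b), where p* = (r1*g/(V-g+r1*g))^(1/(N-1)) and F*(b) = ((( r1*g + r2*b)/(V - g - b + r1*g + r2*b))^(1/(N-1)) - p*)/(1-p*). Equivalently, p* + (1-p*)F*(b) = ((r1*g + r2*b)/(V - g - b + r1*g + r2*b))^(1/(N-1)). -/

import Mathlib

/-- Indifference condition of the symmetric mixed equilibrium: for every bid
`b ∈ [0, V-g]`, `(p* + (1-p*)F*(b))^(N-1) * (V-g-b)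
  = (1 - (p* + (1-p*)F*(b))^(N-1)) * (r1*g + r2*b)`, and equivalently
`p* + (1-p*)F*(b) = ((r1*g + r2*b)/(V-g-b+r1*g+r2*b))^(1/(N-1))`. -/
theorem stmt3 (V g r1 r2 : ℝ) (N : ℕ) (hN : 2 ≤ N)
    (hg : 0 < g) (hVg : g < V) (hr1 : 0 < r1) (hr1' : r1 ≤ 1) (hr2 : 0 ≤ r2) (hr2' : r2 ≤ 1)
    (p : ℝ)
    (hp : p = (r1 * g / (V - g + r1 * g)) ^ (1 / ((N : ℝ) - 1)))
    (F : ℝ → ℝ)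
    (hF : ∀ b, F b =
      (((r1 * g + r2 * b) / (V - g - b + r1 * g + r2 * b)) ^ (1 / ((N : ℝ) - 1)) - p) / (1 - p)) :
    ∀ b ∈ Set.Icc (0:ℝ) (V - g),
      (p + (1 - p) * F b) ^ (N - 1) * (V - g - b)
          = (1 - (p + (1 - p) * F b) ^ (N - 1)) * (r1 * g + r2 * b) ∧
        p + (1 - p) * F b
          = ((r1 * g + r2 * b) / (V - g - b + r1 * g + r2 * b)) ^ (1 / ((N : ℝ) - 1)) := by
  have hVgpos : 0 < V - g := by linarith
  have hn : (0:ℝ) < (N : ℝ) - 1 := by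
    have : (2:ℝ) ≤ (N : ℝ) := by exact_mod_cast hN
    linarith
  have hplt : p < 1 := by
    rw [hp]
    apply Real.rpow_lt_one (by positivity)
    · rw [div_lt_one (by positivity)]; linarith [mul_pos hr1 hg]
    · positivity
  have hpne : (1 : ℝ) - p ≠ 0 := by linarith
  intro b hb
  obtain ⟨hb0, hb1⟩ := hb
  have hA : 0 < r1 * g + r2 * b := by
    have := mul_nonneg hr2 hb0; nlinarith
  have hD : 0 < V - g - b + (r1 * g + r2 * b) := by linarith
  have hq : p + (1 - p) * F b
      = ((r1 * g + r2 * b) / (V - g - b + r1 * g + r2 * b)) ^ (1 / ((N : ℝ) - 1)) := by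
    rw [hF]; field_simp; ring
  refine ⟨?_, hq⟩
  rw [hq]
  have hpow : (((r1 * g + r2 * b) / (V - g - b + r1 * g + r2 * b)) ^ (1 / ((N : ℝ) - 1))) ^ (N - 1)
      = (r1 * g + r2 * b) / (V - g - b + r1 * g + r2 * b) := by
    have hbase : (0:ℝ) ≤ (r1 * g + r2 * b) / (V - g - b + r1 * g + r2 * b) := by
      have : (0:ℝ) < V - g - b + r1 * g + r2 * b := by linarith
      positivity
    rw [← Real.rpow_natCast (((r1 * g + r2 * b) / (V - g - b + r1 * g + r2 * b)) ^ (1 / ((N : ℝ) - 1))) (N - 1),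
      ← Real.rpow_mul hbase]
    have hcast : ((N - 1 : ℕ) : ℝ) = (N : ℝ) - 1 := by
      have : 1 ≤ N := by omega
      push_cast [this]; ring
    rw [hcast, one_div, inv_mul_cancel₀ (ne_of_gt hn), Real.rpow_one]
  rw [hpow]
  have hDne : V - g - b + r1 * g + r2 * b ≠ 0 := by linarith
  field_simp
  ring
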